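/- Let K be a number field, K̄ an algebraic closure of K, and O_K̄ the integral closure of O_K in K̄. Then the automatic Witt vectors over O_K̄ are exactly those arising from finite subextensions: W^a_{O_K}(O_K̄) = ⋃_{L/K finite} W^a_{O_K}(O_L), i.e. ξ ∈ W_{O_K}(O_K̄) is automatic if and only if there exists a finite subextension L/K of K̄/K such that all coefficients ξ_a lie in O_L and ξ, regarded as an element of O_L^{I_K}, is an automatic element of W_{O_K}(O_L). -/

import Mathlib

open NumberField

noncomputable section

/-- The multiplicative monoid `I_K` of nonzero ideals of the ring of integers of `K`. -/
def IdealMonoid (K : Type) [Field K] [NumberField K] : Submonoid (Ideal (𝓞 K)) where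
  carrier := {I | I ≠ ⊥}
  mul_mem' := by
    intro a b ha hb h
    rcases Ideal.mul_eq_bot.mp h with h' | h'
    · exact ha h'
    · exact hb h'
  one_mem' := by
    simp only [Set.mem_setOf_eq, Ideal.one_eq_top]
    exact top_ne_bot

/-- `I_K`, the monoid of nonzero ideals, as a type. -/
abbrev IK (K : Type) [Field K] [NumberField K] := ↥(IdealMonoid K)

/-- `P_K`, the set of nonzero prime ideals of `𝓞 K`, as a type. -/
def PrimeIdeal (K : Type) [Field K] [NumberField K] :=
  {p : Ideal (𝓞 K) // p.IsPrime ∧ p ≠ ⊥}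

/-- A nonzero prime ideal, regarded as an element of `I_K`. -/
def PrimeIdeal.toIK {K : Type} [Field K] [NumberField K] (p : PrimeIdeal K) : IK K :=
  ⟨p.1, p.2.2⟩

/-- `#k_p`: the cardinality of the residue ring `R ⧸ p`. -/
def residueCard {R : Type} [CommRing R] (p : Ideal R) : ℕ :=
  Nat.card (R ⧸ p)

/-- The shift operator `ψ_a` on `A^{I_K}`: `(ψ_a ξ)_b = ξ_{a·b}`. -/
def shift {K : Type} [Field K] [NumberField K] {A : Type} (a : IK K)
    (ξ : IK K → A) : IK K → A :=
  fun b => ξ (a * b)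

/-- For an ideal `p` of `𝓞 K` and a subset `S ⊆ A^{I_K}`, the set `p·S` of all finite
sums of products of elements of `p` with elements of (the module generated by) `S`. -/
def idealMulSet {K : Type} [Field K] [NumberField K] {A : Type} [CommRing A]
    [Algebra (𝓞 K) A] (p : Ideal (𝓞 K)) (S : Set (IK K → A)) : Set (IK K → A) :=
  ↑(p • Submodule.span (𝓞 K) S)

/-- The descending chain `U_n(A)` of subsets of `A^{I_K}`. -/
def UnSet (K : Type) [Field K] [NumberField K] (A : Type) [CommRing A]
    [Algebra (𝓞 K) A] : ℕ → Set (IK K → A)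
  | 0 => Set.univ
  | n + 1 => {ξ | ξ ∈ UnSet K A n ∧ ∀ p : PrimeIdeal K,
      shift p.toIK ξ - ξ ^ residueCard p.1 ∈ idealMulSet p.1 (UnSet K A n)}

/-- The ring of Witt vectors `W_{O_K}(A) = ⋂ₙ U_n(A)`, as a subset of `A^{I_K}`. -/
def WittSet (K : Type) [Field K] [NumberField K] (A : Type) [CommRing A]
    [Algebra (𝓞 K) A] : Set (IK K → A) :=
  ⋂ n, UnSet K A n

/-- A deterministic finite automaton with output, over input alphabet `Δ` and
output alphabet `O`. -/
structure DFAO (Δ O : Type) : Type 1 where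
  State : Type
  [finState : Finite State]
  trans : State → Δ → State
  start : State
  out : State → O

/-- The output of a DFAO on an input word, processing letters from left to right. -/
def DFAO.output {Δ O : Type} (M : DFAO Δ O) (l : List Δ) : O :=
  M.out (l.foldl M.trans M.start)

/-- `ξ ∈ A^{I_K}` is automatic if some DFAO with input alphabet `P_K` and output
alphabet `A` produces `ξ_a` from every word of primes whose product is `a`. -/
def IsAutomatic {K : Type} [Field K] [NumberField K] {A : Type}
    (ξ : IK K → A) : Prop :=
  ∃ M : DFAO (PrimeIdeal K) A, ∀ (l : List (PrimeIdeal K)) (a : IK K),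
    (a : Ideal (𝓞 K)) = (l.map Subtype.val).prod → ξ a = M.output l

/-- `v_p(a)`: the largest `e` such that `p^e` divides `a`. -/
def vIdeal {R : Type} [CommRing R] (p a : Ideal R) : ℕ :=
  sSup {e : ℕ | p ^ e ∣ a}

set_option synthInstance.maxHeartbeats 400000
set_option maxHeartbeats 1000000

variable {K : Type} [Field K] [NumberField K]

section ResidueFacts

variable (p : PrimeIdeal K)

instance : Fact (p.1.IsPrime) := ⟨p.2.1⟩

lemma PrimeIdeal.isMaximal : p.1.IsMaximal :=
  Ideal.IsPrime.isMaximal p.2.1 p.2.2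

noncomputable def resFintype : Fintype (𝓞 K ⧸ p.1) :=
  @Fintype.ofFinite _ (Ideal.finiteQuotientOfFreeOfNeBot p.1 p.2.2)

lemma residueCard_eq : residueCard p.1 = @Fintype.card (𝓞 K ⧸ p.1) (resFintype p) := by
  rw [residueCard, @Nat.card_eq_fintype_card _ (resFintype p)]

lemma fermat (c : 𝓞 K) : c ^ residueCard p.1 - c ∈ p.1 := by
  letI := resFintype p
  letI : Field (𝓞 K ⧸ p.1) := @Ideal.Quotient.field _ _ p.1 (PrimeIdeal.isMaximal p)
  rw [← Ideal.Quotient.eq_zero_iff_mem]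
  have : (Ideal.Quotient.mk p.1 c) ^ (Fintype.card (𝓞 K ⧸ p.1)) = Ideal.Quotient.mk p.1 c :=
    FiniteField.pow_card _
  rw [map_sub, map_pow, residueCard_eq, this, sub_self]

lemma exists_char : ∃ ℓ f : ℕ, ℓ.Prime ∧ residueCard p.1 = ℓ ^ f ∧ (ℓ : 𝓞 K) ∈ p.1 := by
  letI := resFintype p
  letI : Field (𝓞 K ⧸ p.1) := @Ideal.Quotient.field _ _ p.1 (PrimeIdeal.isMaximal p)
  set ℓ := ringChar (𝓞 K ⧸ p.1) with hl
  obtain ⟨f, hprime, hcard⟩ := FiniteField.card (𝓞 K ⧸ p.1) ℓ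
  refine ⟨ℓ, f, hprime, by rw [residueCard_eq p, hcard], ?_⟩
  rw [← Ideal.Quotient.eq_zero_iff_mem, map_natCast]
  exact ringChar.Nat.cast_ringChar

lemma residueCard_pos : 0 < residueCard p.1 := by
  rw [residueCard_eq]
  exact @Fintype.card_pos _ (resFintype p) _

end ResidueFacts

lemma add_pow_sub_sum {R : Type} [CommRing R] (x y : R) (q : ℕ) (hq : q ≠ 0) :
    (x + y) ^ q - x ^ q - y ^ q
      = ∑ k ∈ Finset.Ioo 0 q, x ^ k * y ^ (q - k) * (q.choose k : R) := by
  have h := add_pow x y q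
  have hins : Finset.range (q + 1) = insert 0 (insert q (Finset.Ioo 0 q)) := by
    ext k
    simp only [Finset.mem_range, Finset.mem_insert, Finset.mem_Ioo]
    omega
  rw [hins, Finset.sum_insert, Finset.sum_insert] at h
  · simp only [pow_zero, one_mul, mul_one, Nat.choose_self, Nat.choose_zero_right,
      Nat.cast_one, Nat.sub_zero, Nat.sub_self] at h
    linear_combination h
  · simp [Finset.mem_Ioo]
  · simp only [Finset.mem_insert, Finset.mem_Ioo]
    omega

section Closure

variable {A : Type} [CommRing A] [Algebra (𝓞 K) A]

/-- Closure properties of `UnSet`. -/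
theorem unSet_closed (n : ℕ) :
    (0 : IK K → A) ∈ UnSet K A n ∧ (1 : IK K → A) ∈ UnSet K A n ∧
    (∀ ξ ζ : IK K → A, ξ ∈ UnSet K A n → ζ ∈ UnSet K A n → ξ + ζ ∈ UnSet K A n) ∧
    (∀ (c : 𝓞 K) (ξ : IK K → A), ξ ∈ UnSet K A n → c • ξ ∈ UnSet K A n) ∧
    (∀ ξ ζ : IK K → A, ξ ∈ UnSet K A n → ζ ∈ UnSet K A n → ξ * ζ ∈ UnSet K A n) := by
  induction n with
  | zero => exact ⟨trivial, trivial, fun _ _ _ _ => trivial, fun _ _ _ => trivial,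
      fun _ _ _ _ => trivial⟩
  | succ n ih =>
    obtain ⟨h0, h1, hadd, hsmul, hmul⟩ := ih
    -- the submodule with carrier `UnSet K A n`
    set N : Submodule (𝓞 K) (IK K → A) :=
      { carrier := UnSet K A n
        add_mem' := fun ha hb => hadd _ _ ha hb
        zero_mem' := h0
        smul_mem' := fun c x hx => hsmul c x hx } with hN
    have hNc : ∀ μ : IK K → A, μ ∈ UnSet K A n ↔ μ ∈ N := fun μ => Iff.rfl
    have hspan : Submodule.span (𝓞 K) (UnSet K A n) = N := Submodule.span_eq N
    have hMem : ∀ (p : Ideal (𝓞 K)) (μ : IK K → A),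
        μ ∈ idealMulSet p (UnSet K A n) ↔ μ ∈ p • N := by
      intro p μ
      rw [idealMulSet, hspan]; exact Iff.rfl
    have hpow : ∀ (ξ : IK K → A), ξ ∈ UnSet K A n → ∀ k : ℕ, ξ ^ k ∈ UnSet K A n := by
      intro ξ hξ k
      induction k with
      | zero => simpa using h1
      | succ k ihk => rw [pow_succ]; exact hmul _ _ ihk hξ
    have hle : ∀ p : Ideal (𝓞 K), p • N ≤ N := fun p => Submodule.smul_le_right
    have habs : ∀ (p : Ideal (𝓞 K)) (η : IK K → A), η ∈ UnSet K A n →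
        ∀ m ∈ p • N, η * m ∈ p • N := by
      intro p η hη m hm
      refine Submodule.smul_induction_on hm (fun c hc s hs => ?_) (fun m₁ m₂ hm₁ hm₂ => ?_)
      · rw [mul_smul_comm]
        exact Submodule.smul_mem_smul hc (hmul _ _ hη hs)
      · rw [mul_add]; exact Submodule.add_mem _ hm₁ hm₂
    -- shift of an element of `UnSet (n+1)` is in `UnSet n`
    have hshift : ∀ (ξ : IK K → A), ξ ∈ UnSet K A (n + 1) → ∀ p : PrimeIdeal K,
        shift p.toIK ξ ∈ UnSet K A n := by
      intro ξ hξ p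
      have h := (hξ.2 p)
      rw [hMem] at h
      have : shift p.toIK ξ = (shift p.toIK ξ - ξ ^ residueCard p.1) + ξ ^ residueCard p.1 := by
        ring
      rw [hNc, this]
      exact N.add_mem (hle _ h) (hpow _ hξ.1 _)
    -- binomial sum membership
    have hbin : ∀ (p : PrimeIdeal K) (ξ ζ : IK K → A), ξ ∈ UnSet K A n → ζ ∈ UnSet K A n →
        (ξ + ζ) ^ residueCard p.1 - ξ ^ residueCard p.1 - ζ ^ residueCard p.1
          ∈ p.1 • N := by
      intro p ξ ζ hξ hζ
      obtain ⟨ℓ, f, hℓ, hq, hℓp⟩ := exists_char p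
      rw [add_pow_sub_sum _ _ _ (residueCard_pos p).ne']
      refine Submodule.sum_mem _ (fun k hk => ?_)
      rw [Finset.mem_Ioo] at hk
      obtain ⟨m, hm⟩ : ℓ ∣ (residueCard p.1).choose k := by
        rw [hq]
        exact Nat.Prime.dvd_choose_pow hℓ hk.1.ne' (by rw [← hq]; exact hk.2.ne)
      have : ξ ^ k * ζ ^ (residueCard p.1 - k) * (((residueCard p.1).choose k : ℕ) : IK K → A)
          = (ℓ : 𝓞 K) • ((m : 𝓞 K) • (ξ ^ k * ζ ^ (residueCard p.1 - k))) := by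
        rw [Algebra.smul_def, Algebra.smul_def, map_natCast, map_natCast, hm]
        push_cast
        ring
      rw [this]
      exact Submodule.smul_mem_smul hℓp (N.smul_mem _ (hmul _ _ (hpow _ hξ k) (hpow _ hζ _)))
    refine ⟨⟨h0, ?_⟩, ⟨h1, ?_⟩, ?_, ?_, ?_⟩
    · intro p
      rw [hMem]
      have : shift p.toIK (0 : IK K → A) - (0 : IK K → A) ^ residueCard p.1 = 0 := by
        have hq : residueCard p.1 ≠ 0 := (residueCard_pos p).ne'
        funext b
        simp [shift, zero_pow hq]
      rw [this]
      exact Submodule.zero_mem _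
    · intro p
      rw [hMem]
      have : shift p.toIK (1 : IK K → A) - (1 : IK K → A) ^ residueCard p.1 = 0 := by
        funext b
        simp [shift]
      rw [this]
      exact Submodule.zero_mem _
    · -- addition
      intro ξ ζ hξ hζ
      refine ⟨hadd _ _ hξ.1 hζ.1, fun p => ?_⟩
      rw [hMem]
      have key : shift p.toIK (ξ + ζ) - (ξ + ζ) ^ residueCard p.1
          = (shift p.toIK ξ - ξ ^ residueCard p.1) + (shift p.toIK ζ - ζ ^ residueCard p.1)
            - ((ξ + ζ) ^ residueCard p.1 - ξ ^ residueCard p.1 - ζ ^ residueCard p.1) := by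
        have : shift p.toIK (ξ + ζ) = shift p.toIK ξ + shift p.toIK ζ := rfl
        rw [this]; ring
      rw [key]
      have h1' := hξ.2 p; have h2' := hζ.2 p
      rw [hMem] at h1' h2'
      exact Submodule.sub_mem _ (Submodule.add_mem _ h1' h2') (hbin p ξ ζ hξ.1 hζ.1)
    · -- smul
      intro c ξ hξ
      refine ⟨hsmul c _ hξ.1, fun p => ?_⟩
      rw [hMem]
      have key : shift p.toIK (c • ξ) - (c • ξ) ^ residueCard p.1
          = c • (shift p.toIK ξ - ξ ^ residueCard p.1)
            + (c - c ^ residueCard p.1) • ξ ^ residueCard p.1 := by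
        have h1' : shift p.toIK (c • ξ) = c • shift p.toIK ξ := rfl
        have h2' : (c • ξ) ^ residueCard p.1 = c ^ residueCard p.1 • ξ ^ residueCard p.1 :=
          smul_pow _ _ _
        rw [h1', h2', smul_sub, sub_smul]
        abel
      rw [key]
      have h1' := hξ.2 p
      rw [hMem] at h1'
      refine Submodule.add_mem _ (Submodule.smul_mem _ _ h1') ?_
      have hc : c - c ^ residueCard p.1 ∈ p.1 := by
        have := fermat p c
        have h := p.1.neg_mem this
        simpa using h
      exact Submodule.smul_mem_smul hc (hpow _ hξ.1 _)
    · -- multiplication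
      intro ξ ζ hξ hζ
      refine ⟨hmul _ _ hξ.1 hζ.1, fun p => ?_⟩
      rw [hMem]
      have key : shift p.toIK (ξ * ζ) - (ξ * ζ) ^ residueCard p.1
          = shift p.toIK ξ * (shift p.toIK ζ - ζ ^ residueCard p.1)
            + ζ ^ residueCard p.1 * (shift p.toIK ξ - ξ ^ residueCard p.1) := by
        have : shift p.toIK (ξ * ζ) = shift p.toIK ξ * shift p.toIK ζ := rfl
        rw [this]; ring
      rw [key]
      have h1' := hξ.2 p; have h2' := hζ.2 p
      rw [hMem] at h1' h2'
      exact Submodule.add_mem _ (habs _ _ (hshift ξ hξ p) _ h2') (habs _ _ (hpow _ hζ.1 _) _ h1')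

end Closure

section Submod

variable (K) {A : Type} [CommRing A] [Algebra (𝓞 K) A]

/-- `UnSet K A n` as a submodule. -/
def UnSub (n : ℕ) : Submodule (𝓞 K) (IK K → A) where
  carrier := UnSet K A n
  add_mem' := fun ha hb => (unSet_closed n).2.2.1 _ _ ha hb
  zero_mem' := (unSet_closed n).1
  smul_mem' := fun c x hx => (unSet_closed n).2.2.2.1 c x hx

variable (A)

lemma mem_idealMulSet (n : ℕ) (p : Ideal (𝓞 K)) (μ : IK K → A) :
    μ ∈ idealMulSet p (UnSet K A n) ↔ μ ∈ p • UnSub K n := by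
  have hcoe : (UnSub K (A := A) n : Set (IK K → A)) = UnSet K A n := rfl
  rw [idealMulSet, ← hcoe, Submodule.span_eq]
  exact Iff.rfl

lemma mem_unSub_iff (n : ℕ) (μ : IK K → A) : μ ∈ UnSub K (n : ℕ) ↔ μ ∈ UnSet K A n := Iff.rfl

end Submod

lemma mem_span_singleton_smul_exists {R M : Type*} [CommRing R] [AddCommGroup M] [Module R M]
    {β : R} {N : Submodule R M} {x : M} (h : x ∈ (Ideal.span {β} : Ideal R) • N) :
    ∃ s ∈ N, x = β • s := by
  refine Submodule.smul_induction_on h (fun c hc s hs => ?_) (fun m₁ m₂ hm₁ hm₂ => ?_)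
  · obtain ⟨r, hr⟩ := Ideal.mem_span_singleton'.mp hc
    exact ⟨r • s, N.smul_mem r hs, by rw [← hr, mul_comm, mul_smul]⟩
  · obtain ⟨s₁, hs₁, rfl⟩ := hm₁
    obtain ⟨s₂, hs₂, rfl⟩ := hm₂
    exact ⟨s₁ + s₂, N.add_mem hs₁ hs₂, (smul_add _ _ _).symm⟩

section Descent

variable {A : Type} [CommRing A] [Algebra (𝓞 K) A] {S : Subalgebra (𝓞 K) A}

/-- The key hypothesis allowing descent: exact division by nonzero scalars stays in `S`. -/
def DivClosed (S : Subalgebra (𝓞 K) A) : Prop :=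
  ∀ (β v : 𝓞 K), β ≠ 0 → ∀ x s : A, x ∈ S →
    algebraMap (𝓞 K) A β * s = algebraMap (𝓞 K) A v * x → s ∈ S

theorem descend_smul (hdiv : DivClosed S) (n : ℕ) (p : PrimeIdeal K)
    (hIII : ∀ (x : IK K → A) (h : ∀ a, x a ∈ S), x ∈ UnSet K A n →
      (fun a => (⟨x a, h a⟩ : ↥S)) ∈ UnSet K (↥S) n)
    (x : IK K → A) (h : ∀ a, x a ∈ S)
    (hx : x ∈ idealMulSet p.1 (UnSet K A n)) :
    (fun a => (⟨x a, h a⟩ : ↥S)) ∈ idealMulSet p.1 (UnSet K (↥S) n) := by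
  rw [mem_idealMulSet] at hx ⊢
  set x' : IK K → ↥S := fun a => (⟨x a, h a⟩ : ↥S) with hx'def
  have hxN : x ∈ UnSub K (A := A) n := Submodule.smul_le_right hx
  have hx'N : x' ∈ UnSub K (A := ↥S) n := hIII x h hxN
  -- choose β ∈ p \ p²
  haveI : p.1.IsPrime := p.2.1
  have hlt : p.1 ^ 2 < p.1 := by
    have := Ideal.pow_succ_lt_pow (P := p.1) p.2.2 1
    rwa [pow_one] at this
  obtain ⟨β, hβp, hβp2⟩ := SetLike.exists_of_lt hlt
  have hβ0 : β ≠ 0 := by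
    rintro rfl
    exact hβp2 (Submodule.zero_mem _)
  -- factor (β) = p * b with b ⊄ p
  obtain ⟨b, hb⟩ : p.1 ∣ Ideal.span {β} :=
    Ideal.dvd_iff_le.mpr ((Ideal.span_singleton_le_iff_mem _).mpr hβp)
  have hbp : ¬ b ≤ p.1 := by
    intro hle
    apply hβp2
    have : Ideal.span {β} ≤ p.1 ^ 2 := by
      rw [hb, pow_two]
      exact Ideal.mul_mono le_rfl hle
    exact this (Ideal.mem_span_singleton_self β)
  -- p ⊔ b = ⊤
  have hmax : p.1.IsMaximal := PrimeIdeal.isMaximal p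
  have hsup : p.1 ⊔ b = ⊤ := by
    rcases eq_or_ne (p.1 ⊔ b) ⊤ with h' | h'
    · exact h'
    · exfalso
      apply hbp
      have hlt' : p.1 < p.1 ⊔ b ∨ p.1 = p.1 ⊔ b := by
        rcases eq_or_ne p.1 (p.1 ⊔ b) with h'' | h''
        · exact Or.inr h''
        · exact Or.inl (lt_of_le_of_ne le_sup_left h'')
      rcases hlt' with h'' | h''
      · exact absurd (hmax.1.2 _ h'') h'
      · exact le_sup_right.trans h''.ge
  obtain ⟨u, hu, v, hv, huv⟩ := Submodule.mem_sup.mp (hsup ▸ Submodule.mem_top (x := (1 : 𝓞 K)))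
  -- v • x = β • s with s ∈ UnSub n
  have hvx : v • x ∈ (Ideal.span {β} : Ideal (𝓞 K)) • UnSub K (A := A) n := by
    have h2 : v • x ∈ (b * p.1) • UnSub K (A := A) n := by
      rw [← smul_eq_mul, Submodule.smul_assoc]
      exact Submodule.smul_mem_smul hv hx
    rwa [mul_comm b p.1, ← hb] at h2
  obtain ⟨s, hsN, hs⟩ := mem_span_singleton_smul_exists hvx
  have hsS : ∀ a, s a ∈ S := by
    intro a
    have : β • s a = v • x a := by
      have := congrFun hs a
      simp only [Pi.smul_apply] at this
      exact this.symm
    refine hdiv β v hβ0 (x a) (s a) (h a) ?_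
    rw [← Algebra.smul_def, ← Algebra.smul_def]
    exact this
  have hs'N : (fun a => (⟨s a, hsS a⟩ : ↥S)) ∈ UnSub K (A := ↥S) n := hIII s hsS hsN
  -- conclude
  have hdecomp : x' = u • x' + β • (fun a => (⟨s a, hsS a⟩ : ↥S)) := by
    funext a
    apply Subtype.ext
    have hva : v • x a = β • s a := by
      have := congrFun hs a
      simpa using this
    have : (1 : 𝓞 K) • x a = u • x a + v • x a := by
      rw [← add_smul, huv]
    simp only [Pi.add_apply, Pi.smul_apply]
    push_cast
    rw [one_smul] at this
    calc (x' a : A) = x a := rfl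
      _ = u • x a + v • x a := this
      _ = u • x a + β • s a := by rw [hva]
      _ = _ := rfl
  rw [hdecomp]
  exact Submodule.add_mem _ (Submodule.smul_mem_smul hu hx'N) (Submodule.smul_mem_smul hβp hs'N)

theorem descent (hdiv : DivClosed S) (n : ℕ) :
    (∀ (x : IK K → A) (h : ∀ a, x a ∈ S), x ∈ UnSet K A n →
      (fun a => (⟨x a, h a⟩ : ↥S)) ∈ UnSet K (↥S) n) ∧
    (∀ (p : PrimeIdeal K) (x : IK K → A) (h : ∀ a, x a ∈ S),
      x ∈ idealMulSet p.1 (UnSet K A n) →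
      (fun a => (⟨x a, h a⟩ : ↥S)) ∈ idealMulSet p.1 (UnSet K (↥S) n)) := by
  induction n with
  | zero =>
    refine ⟨fun x h _ => trivial, fun p x h hx => ?_⟩
    exact descend_smul hdiv 0 p (fun x h _ => trivial) x h hx
  | succ n ih =>
    obtain ⟨ih₃, ih₄⟩ := ih
    have III : ∀ (x : IK K → A) (h : ∀ a, x a ∈ S), x ∈ UnSet K A (n + 1) →
        (fun a => (⟨x a, h a⟩ : ↥S)) ∈ UnSet K (↥S) (n + 1) := by
      intro x h hx
      refine ⟨ih₃ x h hx.1, fun p => ?_⟩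
      set q := residueCard p.1
      set y : IK K → A := shift p.toIK x - x ^ q with hy
      have hyS : ∀ a, y a ∈ S := by
        intro a
        exact S.sub_mem (h _) (S.pow_mem (h a) _)
      have hrw : shift p.toIK (fun a => (⟨x a, h a⟩ : ↥S))
            - (fun a => (⟨x a, h a⟩ : ↥S)) ^ q = fun a => (⟨y a, hyS a⟩ : ↥S) := by
        funext a
        apply Subtype.ext
        simp [shift, hy]
      rw [hrw]
      exact ih₄ p y hyS (hx.2 p)
    exact ⟨III, fun p x h hx => descend_smul hdiv (n+1) p III x h hx⟩

end Descent

/-- Every nonzero ideal is a product of a list of nonzero prime ideals. -/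
lemma exists_prime_list (a : IK K) :
    ∃ l : List (PrimeIdeal K), (a : Ideal (𝓞 K)) = (l.map Subtype.val).prod := by
  obtain ⟨f, hf, hassoc⟩ := UniqueFactorizationMonoid.exists_prime_factors (a : Ideal (𝓞 K))
    (by rw [Ideal.zero_eq_bot]; exact a.2)
  obtain ⟨u, hu⟩ := hassoc
  have hu' : (u : Ideal (𝓞 K)) = ⊤ := Ideal.isUnit_iff.mp u.isUnit
  have hprod : (a : Ideal (𝓞 K)) = f.toList.prod := by
    rw [← hu, hu', Ideal.mul_top, Multiset.prod_toList]
  refine ⟨f.toList.attach.map (fun q => (⟨q.1, ?_, ?_⟩ : PrimeIdeal K)), ?_⟩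
  · exact Ideal.isPrime_of_prime (hf q.1 (Multiset.mem_toList.mp q.2))
  · rw [← Ideal.zero_eq_bot]
    exact (hf q.1 (Multiset.mem_toList.mp q.2)).ne_zero
  · rw [hprod]; erw [List.map_map]
    have h2 : f.toList.attach.map Subtype.val = f.toList := List.attach_map_subtype_val _
    conv_lhs => rw [← h2]
    rfl

/-- The ring of integers `O_L = O_K̄ ∩ L` of a subextension `L/K` of `K̄/K`, as a
subalgebra of the integral closure `O_K̄` of `O_K` in `K̄`. -/
def subRingOfIntegers (K : Type) [Field K] [NumberField K]
    (L : IntermediateField K (AlgebraicClosure K)) :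
    Subalgebra (𝓞 K) ↥(integralClosure (𝓞 K) (AlgebraicClosure K)) :=
  (Subalgebra.restrictScalars (𝓞 K) L.toSubalgebra).comap
    (integralClosure (𝓞 K) (AlgebraicClosure K)).val

section Main

variable {L : IntermediateField K (AlgebraicClosure K)}

lemma mem_subROI_iff {x : ↥(integralClosure (𝓞 K) (AlgebraicClosure K))} :
    x ∈ subRingOfIntegers K L ↔ (x : AlgebraicClosure K) ∈ L := Iff.rfl

lemma algebraMap_Kbar_ne_zero {c : 𝓞 K} (hc : c ≠ 0) :
    algebraMap (𝓞 K) (AlgebraicClosure K) c ≠ 0 := by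
  rw [IsScalarTower.algebraMap_apply (𝓞 K) K (AlgebraicClosure K)]
  simp only [ne_eq, map_eq_zero]
  exact fun h => hc (NumberField.RingOfIntegers.coe_eq_zero_iff.mp h)

lemma algebraMap_mem_L (L : IntermediateField K (AlgebraicClosure K)) (c : 𝓞 K) :
    algebraMap (𝓞 K) (AlgebraicClosure K) c ∈ L := by
  rw [IsScalarTower.algebraMap_apply (𝓞 K) K (AlgebraicClosure K)]
  exact L.algebraMap_mem _

lemma divClosed_subROI (L : IntermediateField K (AlgebraicClosure K)) :
    DivClosed (subRingOfIntegers K L) := by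
  intro β v hβ x s hx heq
  rw [mem_subROI_iff] at hx ⊢
  have heq' : algebraMap (𝓞 K) (AlgebraicClosure K) β * (s : AlgebraicClosure K)
      = algebraMap (𝓞 K) (AlgebraicClosure K) v * (x : AlgebraicClosure K) := by
    have := congrArg
      (Subtype.val : ↥(integralClosure (𝓞 K) (AlgebraicClosure K)) → AlgebraicClosure K) heq
    simpa using this
  have hβ' := algebraMap_Kbar_ne_zero (K := K) hβ
  have hs : (s : AlgebraicClosure K) = (algebraMap (𝓞 K) (AlgebraicClosure K) v
      * (x : AlgebraicClosure K)) / algebraMap (𝓞 K) (AlgebraicClosure K) β := by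
    rw [eq_div_iff hβ']
    linear_combination heq'
  rw [hs]
  exact L.div_mem (L.mul_mem (algebraMap_mem_L L v) hx) (algebraMap_mem_L L β)

end Main

lemma IsAutomatic.comp {A B : Type} (f : B → A) {y : IK K → B} (hy : IsAutomatic y) :
    IsAutomatic (fun a => f (y a)) := by
  obtain ⟨M, hM⟩ := hy
  let M' : DFAO (PrimeIdeal K) A :=
    { State := M.State, finState := M.finState, trans := M.trans, start := M.start,
      out := fun s => f (M.out s) }
  refine ⟨M', ?_⟩
  intro l a hl
  have := hM l a hl
  simp only [DFAO.output] at this ⊢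
  rw [this]

/-- `W^a_{O_K}(O_K̄) = ⋃_{L/K finite} W^a_{O_K}(O_L)`: a Witt vector
`ξ ∈ W_{O_K}(O_K̄)` is automatic if and only if there is a finite subextension `L/K`
of `K̄/K` such that all coefficients of `ξ` lie in `O_L` and `ξ`, regarded as an element
of `O_L^{I_K}`, is an automatic element of `W_{O_K}(O_L)`. -/
theorem automatic_iff_automatic_at_finite_level (K : Type) [Field K] [NumberField K]
    (ξ : IK K → ↥(integralClosure (𝓞 K) (AlgebraicClosure K)))
    (hξ : ξ ∈ WittSet K ↥(integralClosure (𝓞 K) (AlgebraicClosure K))) :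
    IsAutomatic ξ ↔
      ∃ (L : IntermediateField K (AlgebraicClosure K)) (_ : FiniteDimensional K ↥L)
        (hmem : ∀ a : IK K, ξ a ∈ subRingOfIntegers K L),
        (fun a : IK K => (⟨ξ a, hmem a⟩ : ↥(subRingOfIntegers K L))) ∈
          WittSet K ↥(subRingOfIntegers K L) ∧
        IsAutomatic (fun a : IK K => (⟨ξ a, hmem a⟩ : ↥(subRingOfIntegers K L))) := by
  classical
  constructor
  · rintro ⟨M, hM⟩
    haveI := M.finState
    set V : Set (AlgebraicClosure K) :=
      Set.range (fun s => ((M.out s : ↥(integralClosure (𝓞 K) (AlgebraicClosure K))) :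
        AlgebraicClosure K)) with hV
    haveI : Finite V := Set.finite_range _
    set L : IntermediateField K (AlgebraicClosure K) := IntermediateField.adjoin K V with hL
    haveI hFD : FiniteDimensional K ↥L := by
      apply IntermediateField.finiteDimensional_adjoin
      intro x _
      exact Algebra.IsIntegral.isIntegral x
    have hval : ∀ a : IK K, ∃ s : M.State, ξ a = M.out s := by
      intro a
      obtain ⟨l, hl⟩ := exists_prime_list a
      exact ⟨l.foldl M.trans M.start, hM l a hl⟩
    have hmem : ∀ a : IK K, ξ a ∈ subRingOfIntegers K L := by
      intro a
      obtain ⟨s, hs⟩ := hval a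
      rw [mem_subROI_iff, hs]
      exact IntermediateField.subset_adjoin K V ⟨s, rfl⟩
    refine ⟨L, hFD, hmem, ?_, ?_⟩
    · rw [WittSet, Set.mem_iInter]
      intro n
      exact (descent (divClosed_subROI L) n).1 ξ hmem (Set.mem_iInter.mp hξ n)
    · let M' : DFAO (PrimeIdeal K) ↥(subRingOfIntegers K L) :=
        { State := M.State, finState := M.finState, trans := M.trans, start := M.start,
          out := fun s => if h : ((M.out s :
              ↥(integralClosure (𝓞 K) (AlgebraicClosure K))) : AlgebraicClosure K) ∈ L then
            (⟨M.out s, h⟩ : ↥(subRingOfIntegers K L)) else 0 }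
      refine ⟨M', ?_⟩
      intro l a hl
      have hout : ξ a = M.out (l.foldl M.trans M.start) := hM l a hl
      have hin : ((M.out (l.foldl M.trans M.start) :
          ↥(integralClosure (𝓞 K) (AlgebraicClosure K))) : AlgebraicClosure K) ∈ L := by
        rw [← hout]
        exact hmem a
      simp only [DFAO.output, M']
      rw [dif_pos hin]
      exact Subtype.ext hout
  · rintro ⟨L, _, hmem, _, hauto⟩
    have := IsAutomatic.comp
      (Subtype.val : ↥(subRingOfIntegers K L) → ↥(integralClosure (𝓞 K) (AlgebraicClosure K)))
      hauto
    exact this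

end
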